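/- arXiv:2503.12457 — 2 statements merged into one kernel-verified Lean document; each statement's English description precedes it below -/
import Mathlib

section
/- If a disturbance x̄ at time k is n-step recoverable and the set {m > 0 | x̄ ∈ Reach_m(τ(k+m))} is nonempty, then it has a minimum n* ≤ n, and the recovery trajectory constructed by rejoining the plan at time k+n* is a valid trajectory of the agent transition system that coincides with τ for all times ≥ k+n*. -/
/-- The `n`-step backward reachable set of a state `x`. -/
def Reach {X : Type*} (T : X → X → Prop) (n : ℕ) (x : X) : Set X :=
  {y | ∃ τ : ℕ → X, τ 0 = y ∧ τ n = x ∧ ∀ j < n, T (τ j) (τ (j + 1))}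

/-- if the disturbance `x̄` at time `k` is `n`-step recoverable
and the set `{m > 0 | x̄ ∈ Reach_m(τ(k+m))}` is nonempty, then it has a
minimum `n* ≤ n`, and the recovery trajectory rejoining the plan at time
`k + n*` is a valid trajectory of the agent transition system coinciding with
`τ` for all times `≥ k + n*`. -/
theorem minimal_recovery_trajectory {X : Type*} (T : X → X → Prop)
    (τ : ℕ → X) (hτ : ∀ m, T (τ m) (τ (m + 1)))
    (k n : ℕ) (xbar : X) (hdist : xbar ≠ τ k)
    (hrec : xbar ∈ Reach T n (τ (k + n)))
    (hne : {m : ℕ | 0 < m ∧ xbar ∈ Reach T m (τ (k + m))}.Nonempty) :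
    ∃ nstar, IsLeast {m : ℕ | 0 < m ∧ xbar ∈ Reach T m (τ (k + m))} nstar ∧
      nstar ≤ n ∧
      ∃ ζ : ℕ → X, ζ k = xbar ∧ (∀ m, k ≤ m → T (ζ m) (ζ (m + 1))) ∧
        ∀ m, k + nstar ≤ m → ζ m = τ m := by
  set S := {m : ℕ | 0 < m ∧ xbar ∈ Reach T m (τ (k + m))} with hS
  have hleast : IsLeast S (sInf S) := ⟨Nat.sInf_mem hne, fun m hm => Nat.sInf_le hm⟩
  refine ⟨sInf S, hleast, ?_, ?_⟩
  · -- n ∈ S since n > 0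
    have hn : 0 < n := by
      rcases Nat.eq_zero_or_pos n with h0 | h
      · exfalso
        rcases hrec with ⟨σ, hσ0, hσn, -⟩
        subst h0
        exact hdist (hσ0 ▸ hσn ▸ rfl)
      · exact h
    exact Nat.sInf_le ⟨hn, hrec⟩
  · obtain ⟨hpos, σ, hσ0, hσn, hσT⟩ := hleast.1
    set ns := sInf S
    refine ⟨fun m => if m < k + ns then σ (m - k) else τ m, ?_, ?_, ?_⟩
    · simp [Nat.lt_add_of_pos_right hpos, hσ0]
    · intro m hm
      rcases lt_trichotomy (m + 1) (k + ns) with h | h | h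
      · have hm' : m < k + ns := by omega
        simp only [if_pos h, if_pos hm']
        have : m + 1 - k = (m - k) + 1 := by omega
        rw [this]
        exact hσT (m - k) (by omega)
      · have hm' : m < k + ns := by omega
        simp only [if_pos hm', if_neg (by omega : ¬ m + 1 < k + ns)]
        have h1 : m + 1 = k + ns := h
        have h2 : m - k + 1 = ns := by omega
        have := hσT (m - k) (by omega)
        rwa [h2, hσn, ← h1] at this
      · have hm' : ¬ m < k + ns := by omega
        simp only [if_neg hm', if_neg (by omega : ¬ m + 1 < k + ns)]
        exact hτ m
    · intro m hm
      simp [Nat.not_lt.mpr hm]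
end

section
/- (Synchronization under Disturbance) Let τ^k be the plan at time k and let k*_i = min{k' > k | τ^k(k') ∈ X^i_sync} be agent i's next synchronization time. If every disturbance occurring to agent i at a time κ ∈ [k, k*_i] is (k*_i − κ)-step recoverable with respect to agent i's eigen-plan, and execution follows the minimal-recovery rule (rejoin the eigen-plan at the earliest recoverable future time), then agent i's realized trajectory passes through π_i(τ^k(k*_i)) at time k*_i, i.e., agent i achieves synchronization at time k*_i. -/
/-- Synchronization under Disturbance.
`plan` is the multi-agent plan `τ^k` at time `k`, `i` a fixed agent with
synchronization states `Xsync` (a set of joint states),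
`kstar = min {k' > k | τ^k(k') ∈ X^i_sync}` the next synchronization time,
`e κ` agent `i`'s eigen-plan at time `κ` (initially the projection of `τ^k`),
and `ζ` agent `i`'s realized trajectory.  Execution follows the minimal
recovery rule (Algorithm 2): on a disturbance, rejoin the eigen-plan at the
earliest recoverable future time; otherwise the eigen-plan is unchanged.  If
every disturbance at a time `κ ∈ [k, k*_i]` is `(k*_i − κ)`-step recoverable
with respect to the eigen-plan, then agent `i`'s realized trajectory passes
through `π_i(τ^k(k*_i))` at time `k*_i`, i.e. it synchronizes at `k*_i`. -/
theorem synchronization_under_disturbance {ι : Type*} {Xi : ι → Type*}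
    (T : ∀ i, Xi i → Xi i → Prop)
    (plan : ℕ → ∀ i, Xi i)
    (i : ι) (Xsync : Set (∀ i, Xi i))
    (k kstar : ℕ)
    (e : ℕ → ℕ → Xi i)          -- eigen-plan of agent i at each time step
    (ζ : ℕ → Xi i)              -- realized trajectory of agent i
    -- k*_i is the least time after k at which the plan is in a sync state
    (hkstar : IsLeast {m | k < m ∧ plan m ∈ Xsync} kstar)
    -- at time k the eigen-plan is the projection of the plan τ^k
    (hinit : ∀ m, k ≤ m → e k m = plan m i)
    -- no disturbance: the eigen-plan is kept unchanged
    (hnodist : ∀ κ, k ≤ κ → κ < kstar → ζ κ = e κ κ →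
      ∀ m, κ < m → e (κ + 1) m = e κ m)
    -- disturbance: it is (k*_i − κ)-step recoverable w.r.t. the eigen-plan,
    -- and the minimal recovery rule rejoins the eigen-plan at the earliest
    -- recoverable horizon n*, then follows it
    (hdist : ∀ κ, k ≤ κ → κ ≤ kstar → ζ κ ≠ e κ κ →
      ζ κ ∈ Reach (T i) (kstar - κ) (e κ kstar) ∧
      ∃ nstar, IsLeast {n | ζ κ ∈ Reach (T i) n (e κ (κ + n))} nstar ∧
        e (κ + 1) κ = ζ κ ∧
        (∀ m, κ ≤ m → T i (e (κ + 1) m) (e (κ + 1) (m + 1))) ∧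
        (∀ m, κ + nstar ≤ m → e (κ + 1) m = e κ m)) :
    ζ kstar = plan kstar i := by
  obtain ⟨⟨hkk, _⟩, _⟩ := hkstar
  have hkle : k ≤ kstar := le_of_lt hkk
  -- e κ kstar is invariant for k ≤ κ ≤ kstar
  have key : ∀ j, k + j ≤ kstar → e (k + j) kstar = plan kstar i := by
    intro j
    induction j with
    | zero => intro _; exact hinit kstar hkle
    | succ n ih =>
      intro hle
      have hlt : k + n < kstar := by omega
      have hkn : k ≤ k + n := by omega
      have ihn : e (k + n) kstar = plan kstar i := ih (by omega)
      by_cases hz : ζ (k + n) = e (k + n) (k + n)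
      · have := hnodist (k + n) hkn hlt hz kstar hlt
        rw [show k + (n + 1) = k + n + 1 by omega, this, ihn]
      · obtain ⟨hreach, nstar, hleast, _, _, hsame⟩ :=
          hdist (k + n) hkn (le_of_lt hlt) hz
        have hmem : ζ (k + n) ∈ Reach (T i) (kstar - (k + n))
            (e (k + n) (k + n + (kstar - (k + n)))) := by
          rw [show k + n + (kstar - (k + n)) = kstar by omega]
          exact hreach
        have hns : nstar ≤ kstar - (k + n) := hleast.2 hmem
        have := hsame kstar (by omega)
        rw [show k + (n + 1) = k + n + 1 by omega, this, ihn]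
  have ekk : e kstar kstar = plan kstar i := by
    have := key (kstar - k) (by omega)
    rwa [show k + (kstar - k) = kstar by omega] at this
  by_cases hz : ζ kstar = e kstar kstar
  · rw [hz, ekk]
  · obtain ⟨hreach, _⟩ := hdist kstar hkle le_rfl hz
    obtain ⟨τ, h0, hn, _⟩ := hreach
    simp only [Nat.sub_self] at hn
    rw [← h0, hn, ekk] at hz
    exact absurd rfl hz
end
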